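/- Fix a > 0 and suppose α_n = 1/(n + a) for all n ≥ 1. Then n·Σ_n converges to 2·R as n → ∞. (Explicitly, ∏_{j=1}^n (1+α_j) = (n+1+a)/(1+a) and Σ_{j=1}^n ∏_{k=0}^{j-1}(1+α_k) = (n(n+1)/2 + n a)/(1+a), so Σ_n = ((n+1+a)/(1+a)) R ( R + ((n(n+1)/2+na)/(1+a)) Σ₀ )⁻¹ Σ₀ ∼ 2R/n.) -/

import Mathlib

open Matrix Finset Filter

private lemma posDef_smul' {d : ℕ} {M : Matrix (Fin d) (Fin d) ℝ} (hM : M.PosDef)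
    {c : ℝ} (hc : 0 < c) : (c • M).PosDef := by
  refine Matrix.PosDef.of_dotProduct_mulVec_pos ?_ (fun x hx => ?_)
  · rw [Matrix.IsHermitian, conjTranspose_smul, star_trivial, hM.1]
  · have h1 : (c • M) *ᵥ x = c • (M *ᵥ x) := smul_mulVec c M x
    rw [h1]
    have := hM.dotProduct_mulVec_pos hx
    have hd : star x ⬝ᵥ c • (M *ᵥ x) = c * (star x ⬝ᵥ (M *ᵥ x)) := by
      simp [dotProduct_smul, smul_eq_mul]
    rw [hd]
    exact mul_pos hc this

private lemma rpfSmulInv {d : ℕ} {c : ℝ} (hc : c ≠ 0) {A : Matrix (Fin d) (Fin d) ℝ}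
    (hA : IsUnit A.det) : (c • A)⁻¹ = c⁻¹ • A⁻¹ := by
  apply Matrix.inv_eq_right_inv
  rw [Matrix.smul_mul, Matrix.mul_smul, Matrix.mul_nonsing_inv _ hA, smul_smul,
    mul_inv_cancel₀ hc, one_smul]

/-- Example 1 of kernel bandwidth modulation: with `α_n = 1/(n+a)` (for a fixed
`a > 0`), the RPF covariance satisfies `n Σ_n → 2 R`. -/
theorem stmt_12 {d : ℕ} (hd : 1 ≤ d)
    (R S0 : Matrix (Fin d) (Fin d) ℝ) (hR : R.PosDef) (hS0pd : S0.PosDef)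
    (a : ℝ) (ha : 0 < a)
    (α : ℕ → ℝ) (hα0 : α 0 = 0)
    (hαdef : ∀ n : ℕ, 1 ≤ n → α n = 1 / ((n : ℝ) + a))
    (S : ℕ → Matrix (Fin d) (Fin d) ℝ) (hS0 : S 0 = S0)
    (hrec : ∀ n, S (n + 1) = (1 + α (n + 1)) • (R * (R + S n)⁻¹ * S n)) :
    Tendsto (fun n : ℕ => (n : ℝ) • S n) atTop (nhds ((2 : ℝ) • R)) := by
  have ha1 : (0:ℝ) < 1 + a := by linarith
  -- the scalar coefficients
  set p : ℕ → ℝ := fun n => (1 + a) / ((n : ℝ) + 1 + a) with hp_def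
  set q : ℕ → ℝ := fun n => ((n : ℝ) * ((n : ℝ) + 1) / 2 + (n : ℝ) * a) / ((n : ℝ) + 1 + a)
    with hq_def
  have hden : ∀ n : ℕ, (0:ℝ) < (n : ℝ) + 1 + a := fun n => by positivity
  -- the closed form for the inverse
  have hkey : ∀ n : ℕ, (S n).PosDef ∧ (S n)⁻¹ = p n • S0⁻¹ + q n • R⁻¹ := by
    intro n
    induction n with
    | zero =>
      refine ⟨hS0 ▸ hS0pd, ?_⟩
      have hp0 : p 0 = 1 := by
        simp only [hp_def, Nat.cast_zero, zero_add]
        field_simp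
      have hq0 : q 0 = 0 := by simp [hq_def]
      rw [hS0, hp0, hq0, one_smul, zero_smul, add_zero]
    | succ n ih =>
      obtain ⟨hSn, hinv⟩ := ih
      have hRS : (R + S n).PosDef := hR.add hSn
      have hSum : ((S n)⁻¹ + R⁻¹).PosDef := hSn.inv.add hR.inv
      -- the matrix identity
      have hX : R * (R + S n)⁻¹ * S n = ((S n)⁻¹ + R⁻¹)⁻¹ := by
        have h1 : (S n)⁻¹ + R⁻¹ = (S n)⁻¹ * (R + S n) * R⁻¹ := by
          rw [Matrix.mul_add, Matrix.add_mul,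
            Matrix.nonsing_inv_mul _ (hSn.det_pos.ne'.isUnit), Matrix.mul_assoc,
            Matrix.mul_nonsing_inv _ (hR.det_pos.ne'.isUnit), Matrix.mul_one, Matrix.one_mul,
            add_comm]
        rw [h1, Matrix.mul_inv_rev, Matrix.mul_inv_rev,
          Matrix.nonsing_inv_nonsing_inv _ (hR.det_pos.ne'.isUnit),
          Matrix.nonsing_inv_nonsing_inv _ (hSn.det_pos.ne'.isUnit), Matrix.mul_assoc]
      set c : ℝ := 1 + α (n + 1) with hc_def
      have hα : α (n + 1) = 1 / ((n : ℝ) + 1 + a) := by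
        have := hαdef (n + 1) (Nat.le_add_left 1 n)
        rw [this]
        push_cast
        ring_nf
      have hcpos : 0 < c := by
        rw [hc_def, hα]
        positivity
      have hXpd : (R * (R + S n)⁻¹ * S n).PosDef := hX ▸ hSum.inv
      have hSn1 : (S (n + 1)).PosDef := by
        rw [hrec n]; exact posDef_smul' hXpd hcpos
      refine ⟨hSn1, ?_⟩
      have hXdet : IsUnit (R * (R + S n)⁻¹ * S n).det := hXpd.det_pos.ne'.isUnit
      rw [hrec n, rpfSmulInv hcpos.ne' hXdet, hX,
        Matrix.nonsing_inv_nonsing_inv _ hSum.det_pos.ne'.isUnit, hinv]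
      have : p n • S0⁻¹ + q n • R⁻¹ + R⁻¹ = p n • S0⁻¹ + (q n + 1) • R⁻¹ := by
        rw [add_smul, one_smul, add_assoc]
      rw [this, smul_add, smul_smul, smul_smul]
      congr 1
      · congr 1
        rw [hp_def]
        have h2 : ((n:ℕ)+1 : ℕ) = n + 1 := rfl
        push_cast
        rw [hc_def, hα]
        have hne : ((n : ℝ) + 1 + a) ≠ 0 := (hden n).ne'
        have hne2 : ((n : ℝ) + 1 + 1 + a) ≠ 0 := by positivity
        field_simp
        ring
      · congr 1
        rw [hq_def]
        push_cast
        rw [hc_def, hα]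
        have hne : ((n : ℝ) + 1 + a) ≠ 0 := (hden n).ne'
        have hne2 : ((n : ℝ) + 1 + 1 + a) ≠ 0 := by positivity
        field_simp
        ring
  -- the function whose inverse is n • S n
  set g : ℕ → Matrix (Fin d) (Fin d) ℝ :=
    fun n => (p n / n) • S0⁻¹ + (q n / n) • R⁻¹ with hg_def
  -- eventual equality
  have hev : ∀ᶠ n in atTop, (g n)⁻¹ = (n : ℝ) • S n := by
    filter_upwards [eventually_ge_atTop 1] with n hn
    obtain ⟨hSn, hinv⟩ := hkey n
    have hnne : ((n : ℝ)) ≠ 0 := by positivity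
    have hSinv_det : IsUnit ((S n)⁻¹).det := hSn.inv.det_pos.ne'.isUnit
    have h1 : g n = (n : ℝ)⁻¹ • (S n)⁻¹ := by
      rw [hg_def, hinv, smul_add, smul_smul, smul_smul]
      simp only [div_eq_inv_mul, mul_comm]
    rw [h1, rpfSmulInv (inv_ne_zero hnne) hSinv_det, inv_inv,
      Matrix.nonsing_inv_nonsing_inv _ hSn.det_pos.ne'.isUnit]
  -- scalar limits
  have hlim_inv : Tendsto (fun n : ℕ => 1 / ((n : ℝ) + 1 + a)) atTop (nhds 0) := by
    apply Tendsto.div_atTop (tendsto_const_nhds)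
    have : Tendsto (fun n : ℕ => (n : ℝ) + (1 + a)) atTop atTop :=
      tendsto_atTop_add_const_right _ _ tendsto_natCast_atTop_atTop
    simpa [add_assoc] using this
  have hp_lim : Tendsto (fun n : ℕ => p n / n) atTop (nhds 0) := by
    have heq : (fun n : ℕ => p n / n) = fun n : ℕ => (1 + a) / ((n : ℝ) + 1 + a) * (1 / n) := by
      funext n
      simp only [hp_def, mul_one_div, div_div]
    rw [heq]
    have := hlim_inv.const_mul (1 + a)
    have h2 : Tendsto (fun n : ℕ => ((1+a) / ((n : ℝ) + 1 + a)) * (1 / n)) atTop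
        (nhds (0 * 0)) := by
      apply Tendsto.mul _ tendsto_one_div_atTop_nhds_zero_nat
      simpa [div_eq_mul_inv, one_div, mul_comm] using this
    simpa using h2
  have hq_lim : Tendsto (fun n : ℕ => q n / n) atTop (nhds (1/2 : ℝ)) := by
    have heq : ∀ᶠ n : ℕ in atTop, (1/2 : ℝ) + (a/2) * (1 / ((n : ℝ) + 1 + a)) = q n / n := by
      filter_upwards [eventually_ge_atTop 1] with n hn
      have hnne : ((n : ℝ)) ≠ 0 := by positivity
      have hne : ((n : ℝ) + 1 + a) ≠ 0 := (hden n).ne'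
      rw [hq_def]
      field_simp
      ring
    have h2 : Tendsto (fun n : ℕ => (1/2 : ℝ) + (a/2) * (1 / ((n : ℝ) + 1 + a))) atTop
        (nhds ((1/2 : ℝ) + (a/2) * 0)) :=
      tendsto_const_nhds.add (tendsto_const_nhds.mul hlim_inv)
    simp only [mul_zero, add_zero] at h2
    exact h2.congr' heq
  -- matrix limit of g
  have hg_lim : Tendsto g atTop (nhds ((1/2 : ℝ) • R⁻¹)) := by
    have h1 : Tendsto g atTop (nhds ((0 : ℝ) • S0⁻¹ + (1/2 : ℝ) • R⁻¹)) :=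
      (hp_lim.smul_const S0⁻¹).add (hq_lim.smul_const R⁻¹)
    simpa using h1
  -- continuity of inversion at the limit
  have hLpd : ((1/2 : ℝ) • R⁻¹).PosDef := posDef_smul' hR.inv (by norm_num)
  have hcont : ContinuousAt Inv.inv ((1/2 : ℝ) • R⁻¹) := by
    apply continuousAt_matrix_inv
    rw [Ring.inverse_eq_inv']
    exact continuousAt_inv₀ hLpd.det_pos.ne'
  have hfinal : Tendsto (fun n => (g n)⁻¹) atTop (nhds (((1/2 : ℝ) • R⁻¹)⁻¹)) :=
    hcont.tendsto.comp hg_lim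
  have hLinv : ((1/2 : ℝ) • R⁻¹)⁻¹ = (2 : ℝ) • R := by
    rw [rpfSmulInv (by norm_num : (1/2:ℝ) ≠ 0) hR.inv.det_pos.ne'.isUnit,
      Matrix.nonsing_inv_nonsing_inv _ hR.det_pos.ne'.isUnit]
    norm_num
  rw [hLinv] at hfinal
  exact hfinal.congr' hev
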